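/- On an almost Golden Riemannian manifold, the almost Golden structure φ is integrable (N_φ = 0) if and only if the torsion T⁰ of the first canonical connection vanishes on pairs of vector fields both lying in D_ϕ (the ϕ-eigendistribution of φ) and on pairs both lying in D_{ϕ̄} (the ϕ̄-eigendistribution). -/

import Mathlib

/-- Nijenhuis tensor `N_A(X,Y) = A²[X,Y] + [AX,AY] − A[AX,Y] − A[X,AY]`. -/
def nijenhuis {V : Type*} [LieRing V] [LieAlgebra ℝ V] (A : V →ₗ[ℝ] V) (X Y : V) : V :=
  A (A ⁅X, Y⁆) + ⁅A X, A Y⁆ - A ⁅A X, Y⁆ - A ⁅X, A Y⁆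

/-- The induced almost product structure `J_φ = (1/√5)(2φ − Id)`. -/
noncomputable def inducedJ {V : Type*} [AddCommGroup V] [Module ℝ V] (φ : V →ₗ[ℝ] V) : V →ₗ[ℝ] V :=
  (Real.sqrt 5)⁻¹ • (2 • φ - LinearMap.id)

/-- The first canonical covariant derivative `∇⁰_X Y = ∇_X Y − (1/2)(∇_X J)(J Y)`. -/
noncomputable def firstCanonical {V : Type*} [AddCommGroup V] [Module ℝ V]
    (nab : V →ₗ[ℝ] V →ₗ[ℝ] V) (J : V →ₗ[ℝ] V) (X Y : V) : V :=
  nab X Y - ((1 : ℝ)/2) • (nab X (J (J Y)) - J (nab X (J Y)))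

/-- The torsion `T⁰(X,Y) = ∇⁰_X Y − ∇⁰_Y X − [X,Y]` of the first canonical connection. -/
noncomputable def torsion0 {V : Type*} [LieRing V] [LieAlgebra ℝ V]
    (nab : V →ₗ[ℝ] V →ₗ[ℝ] V) (J : V →ₗ[ℝ] V) (X Y : V) : V :=
  firstCanonical nab J X Y - firstCanonical nab J Y X - ⁅X, Y⁆

section Aux
set_option linter.unusedSectionVars false
set_option linter.unnecessarySeqFocus false

variable {V : Type*} [LieRing V] [LieAlgebra ℝ V] (φ : V →ₗ[ℝ] V)
  (nab : V →ₗ[ℝ] V →ₗ[ℝ] V) (J : V →ₗ[ℝ] V) (s c d : ℝ)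

lemma phi_phi (hφ : φ ∘ₗ φ = φ + LinearMap.id) (v : V) : φ (φ v) = φ v + v := by
  have := LinearMap.ext_iff.mp hφ v
  simpa using this

lemma J_app (v : V) : inducedJ φ v = (Real.sqrt 5)⁻¹ • ((2:ℝ) • φ v - v) := by
  simp [inducedJ, two_smul]

variable (hφ : φ ∘ₗ φ = φ + LinearMap.id)
  (htf : ∀ X Y : V, nab X Y - nab Y X = ⁅X, Y⁆)
  (hs : s * s = 5) (hs0 : s ≠ 0) (hc : c = (1 + s)/2) (hd : d = (1 - s)/2)
  (hJ : ∀ v : V, J v = s⁻¹ • ((2:ℝ) • φ v - v))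

include hφ hs hs0 hJ in
lemma JJaux (v : V) : J (J v) = v := by
  rw [hJ, hJ, map_smul, map_sub, map_smul, phi_phi φ hφ]
  match_scalars
  · field_simp
    ring
  · field_simp
    nlinarith [hs, sq_nonneg s]

include hs hs0 hc hJ in
lemma Jpos_iff (v : V) : J v = v ↔ φ v = c • v := by
  rw [hJ, hc]
  constructor
  · intro h
    have h2 : s • (s⁻¹ • ((2:ℝ) • φ v - v)) = s • v := congrArg _ h
    rw [smul_smul, mul_inv_cancel₀ hs0, one_smul] at h2
    linear_combination (norm := module) ((1:ℝ)/2) • h2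
  · intro h
    rw [h]
    match_scalars <;> field_simp <;> ring

include hs hs0 hd hJ in
lemma Jneg_iff (v : V) : J v = -v ↔ φ v = d • v := by
  rw [hJ, hd]
  constructor
  · intro h
    have h2 : s • (s⁻¹ • ((2:ℝ) • φ v - v)) = s • (-v) := congrArg _ h
    rw [smul_smul, mul_inv_cancel₀ hs0, one_smul] at h2
    linear_combination (norm := module) ((1:ℝ)/2) • h2
  · intro h
    rw [h]
    match_scalars <;> field_simp <;> ring

include htf hφ hs hs0 hJ in
lemma torsion_pos (X Y : V) (hX : J X = X) (hY : J Y = Y) :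
    torsion0 nab J X Y = ((1:ℝ)/2) • (J ⁅X, Y⁆ - ⁅X, Y⁆) := by
  have key : J (nab X Y) - J (nab Y X) = J ⁅X, Y⁆ := by
    rw [← map_sub, htf]
  simp only [torsion0, firstCanonical, hX, hY, JJaux φ J s hφ hs hs0 hJ]
  linear_combination (norm := module) ((1:ℝ)/2) • htf X Y + ((1:ℝ)/2) • key

include htf hφ hs hs0 hJ in
lemma torsion_neg (X Y : V) (hX : J X = -X) (hY : J Y = -Y) :
    torsion0 nab J X Y = -(((1:ℝ)/2) • (J ⁅X, Y⁆ + ⁅X, Y⁆)) := by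
  have key : J (nab X Y) - J (nab Y X) = J ⁅X, Y⁆ := by
    rw [← map_sub, htf]
  simp only [torsion0, firstCanonical, hX, hY, JJaux φ J s hφ hs hs0 hJ, map_neg, neg_neg]
  linear_combination (norm := module) ((1:ℝ)/2) • htf X Y - ((1:ℝ)/2) • key

include hφ in
lemma nij_two (c' d' : ℝ) (X Y : V) (hX : φ X = c' • X) (hY : φ Y = d' • Y) :
    nijenhuis φ X Y = (1 - c' - d') • φ ⁅X, Y⁆ + (1 + c'*d') • ⁅X, Y⁆ := by
  simp only [nijenhuis, hX, hY, lie_smul, smul_lie, map_smul, phi_phi φ hφ, smul_smul]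
  match_scalars <;> ring

lemma nij_add_left (X X' Y : V) :
    nijenhuis φ (X + X') Y = nijenhuis φ X Y + nijenhuis φ X' Y := by
  simp only [nijenhuis, add_lie, lie_add, map_add]
  abel

lemma nij_add_right (X Y Y' : V) :
    nijenhuis φ X (Y + Y') = nijenhuis φ X Y + nijenhuis φ X Y' := by
  simp only [nijenhuis, add_lie, lie_add, map_add]
  abel

include hφ hs hs0 hc hd in
lemma eig_decomp (v : V) : ∃ p q : V, v = p + q ∧ φ p = c • p ∧ φ q = d • q := by
  have hs2 : s^2 = 5 := by rw [sq]; exact hs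
  have hs3 : s^3 = 5*s := by rw [pow_succ, sq, hs]
  refine ⟨s⁻¹ • (φ v - d • v), s⁻¹ • (c • v - φ v), ?_, ?_, ?_⟩
  · rw [hc, hd]
    match_scalars <;> field_simp <;> ring
  · rw [hc, hd, map_smul, map_sub, map_smul, phi_phi φ hφ]
    match_scalars <;> field_simp <;> (first | ring1 | linarith [hs2, hs3])
  · rw [hc, hd, map_smul, map_sub, map_smul, phi_phi φ hφ]
    match_scalars <;> field_simp <;> (first | ring1 | linarith [hs2, hs3])

include hφ hs hc hd in
lemma nij_mixed (a b : V) (ha : φ a = c • a) (hb : φ b = d • b) : nijenhuis φ a b = 0 := by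
  rw [nij_two φ hφ c d a b ha hb]
  have e1 : (1 : ℝ) - c - d = 0 := by rw [hc, hd]; ring
  have e2 : (1 : ℝ) + c * d = 0 := by rw [hc, hd]; nlinarith [hs, sq_nonneg s]
  rw [e1, e2]
  simp

include hφ hs hc hd in
lemma nij_mixed' (a b : V) (ha : φ a = d • a) (hb : φ b = c • b) : nijenhuis φ a b = 0 := by
  rw [nij_two φ hφ d c a b ha hb]
  have e1 : (1 : ℝ) - d - c = 0 := by rw [hc, hd]; ring
  have e2 : (1 : ℝ) + d * c = 0 := by rw [hc, hd]; nlinarith [hs, sq_nonneg s]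
  rw [e1, e2]
  simp

include hφ hs in
lemma nij_same (c' : ℝ) (hc' : 1 + c' - c' * c' = 0) (a b : V)
    (ha : φ a = c' • a) (hb : φ b = c' • b) (hL : φ ⁅a, b⁆ = c' • ⁅a, b⁆) :
    nijenhuis φ a b = 0 := by
  rw [nij_two φ hφ c' c' a b ha hb, hL, smul_smul]
  have e : (1 - c' - c') * c' + (1 + c' * c') = 0 := by nlinarith [hc']
  match_scalars
  linear_combination e

include hφ hs hs0 hc in
lemma extract_pos (X Y : V) (hX : φ X = c • X) (hY : φ Y = c • Y)
    (hN : nijenhuis φ X Y = 0) : φ ⁅X, Y⁆ = c • ⁅X, Y⁆ := by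
  rw [nij_two φ hφ c c X Y hX hY] at hN
  have e1 : (1 : ℝ) - c - c = -s := by rw [hc]; ring
  have e2 : (1 : ℝ) + c * c = s * c := by rw [hc]; nlinarith [hs, sq_nonneg s]
  rw [e1, e2] at hN
  have h2 : s • φ ⁅X, Y⁆ = s • (c • ⁅X, Y⁆) := by
    rw [smul_smul]
    linear_combination (norm := module) -hN
  have := congrArg (fun w => s⁻¹ • w) h2
  simpa [smul_smul, ← mul_assoc, inv_mul_cancel₀ hs0] using this

include hφ hs hs0 hd in
lemma extract_neg (X Y : V) (hX : φ X = d • X) (hY : φ Y = d • Y)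
    (hN : nijenhuis φ X Y = 0) : φ ⁅X, Y⁆ = d • ⁅X, Y⁆ := by
  rw [nij_two φ hφ d d X Y hX hY] at hN
  have e1 : (1 : ℝ) - d - d = s := by rw [hd]; ring
  have e2 : (1 : ℝ) + d * d = -(s * d) := by rw [hd]; nlinarith [hs, sq_nonneg s]
  rw [e1, e2] at hN
  have h2 : s • φ ⁅X, Y⁆ = s • (d • ⁅X, Y⁆) := by
    rw [smul_smul]
    linear_combination (norm := module) hN
  have := congrArg (fun w => s⁻¹ • w) h2
  simpa [smul_smul, ← mul_assoc, inv_mul_cancel₀ hs0] using this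

include hφ htf hs hs0 hc hd hJ in
lemma golden_aux :
    (∀ X Y : V, nijenhuis φ X Y = 0) ↔
      ((∀ X Y : V, φ X = c • X → φ Y = c • Y → torsion0 nab J X Y = 0)
        ∧ (∀ X Y : V, φ X = d • X → φ Y = d • Y → torsion0 nab J X Y = 0)) := by
  constructor
  · intro hN
    constructor
    · intro X Y hX hY
      have hL := extract_pos φ s c hφ hs hs0 hc X Y hX hY (hN X Y)
      rw [torsion_pos φ nab J s hφ htf hs hs0 hJ X Y
          ((Jpos_iff φ J s c hs hs0 hc hJ X).mpr hX) ((Jpos_iff φ J s c hs hs0 hc hJ Y).mpr hY),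
        (Jpos_iff φ J s c hs hs0 hc hJ _).mpr hL, sub_self, smul_zero]
    · intro X Y hX hY
      have hL := extract_neg φ s d hφ hs hs0 hd X Y hX hY (hN X Y)
      rw [torsion_neg φ nab J s hφ htf hs hs0 hJ X Y
          ((Jneg_iff φ J s d hs hs0 hd hJ X).mpr hX) ((Jneg_iff φ J s d hs hs0 hd hJ Y).mpr hY),
        (Jneg_iff φ J s d hs hs0 hd hJ _).mpr hL, neg_add_cancel, smul_zero, neg_zero]
  · rintro ⟨h1, h2⟩ X Y
    obtain ⟨px, qx, hxpq, hpx, hqx⟩ := eig_decomp φ s c d hφ hs hs0 hc hd X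
    obtain ⟨py, qy, hypq, hpy, hqy⟩ := eig_decomp φ s c d hφ hs hs0 hc hd Y
    have hcc : 1 + c - c * c = 0 := by rw [hc]; nlinarith [hs, sq_nonneg s]
    have hdd : 1 + d - d * d = 0 := by rw [hd]; nlinarith [hs, sq_nonneg s]
    have samepos : nijenhuis φ px py = 0 := by
      have ht := h1 px py hpx hpy
      rw [torsion_pos φ nab J s hφ htf hs hs0 hJ px py
          ((Jpos_iff φ J s c hs hs0 hc hJ px).mpr hpx)
          ((Jpos_iff φ J s c hs hs0 hc hJ py).mpr hpy)] at ht
      have hJL : J ⁅px, py⁆ = ⁅px, py⁆ := by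
        rcases smul_eq_zero.mp ht with h | h
        · norm_num at h
        · exact sub_eq_zero.mp h
      exact nij_same φ s hφ hs c hcc px py hpx hpy ((Jpos_iff φ J s c hs hs0 hc hJ _).mp hJL)
    have sameneg : nijenhuis φ qx qy = 0 := by
      have ht := h2 qx qy hqx hqy
      rw [torsion_neg φ nab J s hφ htf hs hs0 hJ qx qy
          ((Jneg_iff φ J s d hs hs0 hd hJ qx).mpr hqx)
          ((Jneg_iff φ J s d hs hs0 hd hJ qy).mpr hqy), neg_eq_zero] at ht
      have hJL : J ⁅qx, qy⁆ = -⁅qx, qy⁆ := by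
        rcases smul_eq_zero.mp ht with h | h
        · norm_num at h
        · exact add_eq_zero_iff_eq_neg.mp h
      exact nij_same φ s hφ hs d hdd qx qy hqx hqy ((Jneg_iff φ J s d hs hs0 hd hJ _).mp hJL)
    rw [hxpq, hypq, nij_add_left, nij_add_right, nij_add_right,
      samepos, nij_mixed φ s c d hφ hs hc hd px qy hpx hqy,
      nij_mixed' φ s c d hφ hs hc hd qx py hqx hpy, sameneg]
    simp

end Aux

/-- On an almost Golden Riemannian manifold, `φ` is integrable (`N_φ = 0`) iff the
torsion `T⁰` of the first canonical connection vanishes on pairs of vector fields both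
in the `ϕ = (1+√5)/2` eigendistribution `D_ϕ` of `φ` and on pairs both in the
`ϕ̄ = (1−√5)/2` eigendistribution `D_ϕ̄`.  Here `nab` is the Levi-Civita connection. -/
theorem golden_integrable_iff_torsion0 {V A : Type*} [LieRing V] [LieAlgebra ℝ V]
    [CommRing A] [Algebra ℝ A]
    (φ : V →ₗ[ℝ] V) (hφ : φ ∘ₗ φ = φ + LinearMap.id)
    (g : V →ₗ[ℝ] V →ₗ[ℝ] A) (hsym : ∀ X Y : V, g X Y = g Y X)
    (hpure : ∀ X Y : V, g (φ X) Y = g X (φ Y))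
    (Dv : V → A →ₗ[ℝ] A) (hD : ∀ (X : V) (a b : A), Dv X (a * b) = a * Dv X b + b * Dv X a)
    (nab : V →ₗ[ℝ] V →ₗ[ℝ] V)
    (htf : ∀ X Y : V, nab X Y - nab Y X = ⁅X, Y⁆)
    (hmetric : ∀ X Y Z : V, Dv X (g Y Z) = g (nab X Y) Z + g Y (nab X Z)) :
    (∀ X Y : V, nijenhuis φ X Y = 0) ↔
      ((∀ X Y : V, φ X = ((1 + Real.sqrt 5)/2) • X → φ Y = ((1 + Real.sqrt 5)/2) • Y →
          torsion0 nab (inducedJ φ) X Y = 0)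
        ∧ (∀ X Y : V, φ X = ((1 - Real.sqrt 5)/2) • X → φ Y = ((1 - Real.sqrt 5)/2) • Y →
          torsion0 nab (inducedJ φ) X Y = 0)) := by
  have hs : Real.sqrt 5 * Real.sqrt 5 = 5 := Real.mul_self_sqrt (by norm_num)
  have hs0 : Real.sqrt 5 ≠ 0 := by
    have : (0:ℝ) < Real.sqrt 5 := Real.sqrt_pos.mpr (by norm_num)
    linarith
  exact golden_aux φ nab (inducedJ φ) (Real.sqrt 5) ((1 + Real.sqrt 5)/2) ((1 - Real.sqrt 5)/2)
    hφ htf hs hs0 rfl rfl (J_app φ)
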